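/- In the setting of the semidirect-type construction (skew brace B = (B,+,∘) with (B,+) abelian, group C, homomorphisms φ,γ : C → Aut(B,+), ψ : C → Aut(B,∘) satisfying conditions (i)–(iv), and the skew brace A = (B × C, ·, ∘) so constructed): let f ∈ Aut(A) and β ∈ Aut(B) (an automorphism of both (B,+) and (B,∘)) be such that f(b,1) = (β(b),1) for all b ∈ B. Fix c ∈ C and write f(0,c) = ((φ_{c₀}γ_{c₀})(b₀), c₀) with b₀ ∈ B, c₀ ∈ C. Then: β ∘ φ_c = φ_{c₀} ∘ β, β ∘ γ_c = γ_{c₀} ∘ λ_{b₀} ∘ β, and (λ_{b₀}∘β)(b) − (ψ_{c₀}⁻¹∘β∘ψ_c)(b) = λ_{(ψ_{c₀}⁻¹βψ_c)(b)}(b₀) − b₀ for all b ∈ B, where − is subtraction in (B,+). -/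

import Mathlib

/-- A skew brace structure whose additive group is the given abelian group `(B, +)`:
a second group operation `circ` with identity `0`, satisfying the brace relation
`a ∘ (b + c) = (a ∘ b) - a + (a ∘ c)`. -/
structure AddSkewBrace (B : Type*) [AddCommGroup B] where
  circ : B → B → B
  circInv : B → B
  circ_assoc : ∀ a b c, circ (circ a b) c = circ a (circ b c)
  zero_circ : ∀ a, circ 0 a = a
  circ_zero : ∀ a, circ a 0 = a
  circInv_circ : ∀ a, circ (circInv a) a = 0
  brace : ∀ a b c, circ a (b + c) = circ a b + -a + circ a c

/-- The map `λ_b : b' ↦ -b + (b ∘ b')`. -/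
def AddSkewBrace.lam {B : Type*} [AddCommGroup B] (S : AddSkewBrace B) (b b' : B) : B :=
  -b + S.circ b b'

/-- A pair of binary operations `dot`, `circ` on a set `A` forms a skew brace:
both make `A` a group, the two groups share the same identity element, and the
brace relation `a ∘ (b · c) = (a ∘ b) · a⁻¹ · (a ∘ c)` holds. -/
def IsSkewBraceOps {A : Type*} (dot circ : A → A → A) : Prop :=
  ∃ (e : A) (dinv cinv : A → A),
    (∀ a b c, dot (dot a b) c = dot a (dot b c)) ∧
    (∀ a, dot e a = a) ∧ (∀ a, dot a e = a) ∧ (∀ a, dot (dinv a) a = e) ∧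
    (∀ a b c, circ (circ a b) c = circ a (circ b c)) ∧
    (∀ a, circ e a = a) ∧ (∀ a, circ a e = a) ∧ (∀ a, circ (cinv a) a = e) ∧
    (∀ a b c, circ a (dot b c) = dot (dot (circ a b) (dinv a)) (circ a c))

/-- In the setting of the semidirect-type construction, if `f` is a skew brace
automorphism of `A = B × C` such that `f(b,1) = (β(b),1)` for an automorphism `β` of
the skew brace `B`, and `f(0,c) = ((φ_{c₀}γ_{c₀})(b₀), c₀)`, then
`β φ_c = φ_{c₀} β`, `β γ_c = γ_{c₀} λ_{b₀} β`, and
`(λ_{b₀}β)(b) - (ψ_{c₀}⁻¹βψ_c)(b) = λ_{(ψ_{c₀}⁻¹βψ_c)(b)}(b₀) - b₀` for all `b`. -/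
theorem skewBrace_construction_aut_constraints {B C : Type*} [AddCommGroup B] [Group C]
    (S : AddSkewBrace B) (φ γ ψ : C → B ≃ B)
    (hφadd : ∀ c b b', φ c (b + b') = φ c b + φ c b')
    (hγadd : ∀ c b b', γ c (b + b') = γ c b + γ c b')
    (hψcirc : ∀ c b b', ψ c (S.circ b b') = S.circ (ψ c b) (ψ c b'))
    (hφhom : ∀ c c' b, φ (c * c') b = φ c (φ c' b))
    (hγhom : ∀ c c' b, γ (c * c') b = γ c (γ c' b))
    (hψhom : ∀ c c' b, ψ (c * c') b = ψ c (ψ c' b))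
    (h1 : ∀ c b b', γ c (S.lam ((ψ c).symm b) b') = S.lam b (γ c b'))
    (h2 : ∀ c b b', φ c (S.lam b b') = S.lam b (φ c b'))
    (h3 : ∀ c c' b, φ c (γ c' b) = γ c' (φ c b))
    (h4 : ∀ c c' b, φ c' (γ (c * c') ((ψ (c * c')).symm b) - γ c' ((ψ c').symm b)) =
            γ c ((ψ c).symm b) - b)
    -- `f` is an automorphism of the constructed skew brace `A = B × C`:
    (f : B × C → B × C) (hfbij : Function.Bijective f)
    (hfdot : ∀ p q : B × C,
      f (p.1 + φ p.2 q.1, p.2 * q.2) = ((f p).1 + φ (f p).2 (f q).1, (f p).2 * (f q).2))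
    (hfcirc : ∀ p q : B × C,
      f (φ (p.2 * q.2) (γ (p.2 * q.2)
          (S.circ ((ψ q.2).symm ((γ p.2).symm ((φ p.2).symm p.1)))
            ((γ q.2).symm ((φ q.2).symm q.1)))), p.2 * q.2)
        = (φ ((f p).2 * (f q).2) (γ ((f p).2 * (f q).2)
            (S.circ ((ψ (f q).2).symm ((γ (f p).2).symm ((φ (f p).2).symm (f p).1)))
              ((γ (f q).2).symm ((φ (f q).2).symm (f q).1)))), (f p).2 * (f q).2))
    -- `β` is an automorphism of the skew brace `B` describing `f` on `B × {1}`: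
    (β : B ≃ B) (hβadd : ∀ b b', β (b + b') = β b + β b')
    (hβcirc : ∀ b b', β (S.circ b b') = S.circ (β b) (β b'))
    (hfβ : ∀ b : B, f (b, 1) = (β b, 1))
    (c c₀ : C) (b₀ : B) (hf0 : f (0, c) = (φ c₀ (γ c₀ b₀), c₀)) :
    (∀ b, β (φ c b) = φ c₀ (β b)) ∧
    (∀ b, β (γ c b) = γ c₀ (S.lam b₀ (β b))) ∧
    (∀ b, S.lam b₀ (β b) - (ψ c₀).symm (β (ψ c b)) =
      S.lam ((ψ c₀).symm (β (ψ c b))) b₀ - b₀) := by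
  -- basic facts about φ, γ, ψ
  have hφ0 : ∀ c', φ c' (0:B) = 0 := by
    intro c'
    have h := hφadd c' 0 0
    rw [add_zero] at h
    exact left_eq_add.mp h
  have hγ0 : ∀ c', γ c' (0:B) = 0 := by
    intro c'
    have h := hγadd c' 0 0
    rw [add_zero] at h
    exact left_eq_add.mp h
  have hψ0 : ∀ c', ψ c' (0:B) = 0 := by
    intro c'
    have h := hψcirc c' 0 0
    rw [S.circ_zero] at h
    set a := ψ c' (0:B) with ha
    have h2 : S.circ (S.circInv a) a = 0 := S.circInv_circ a
    calc a = S.circ 0 a := (S.zero_circ a).symm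
      _ = S.circ (S.circ (S.circInv a) a) a := by rw [h2]
      _ = S.circ (S.circInv a) (S.circ a a) := S.circ_assoc _ _ _
      _ = S.circ (S.circInv a) a := by rw [← h]
      _ = 0 := h2
  have hφ1 : ∀ b, φ (1:C) b = b := fun b =>
    (φ 1).injective (by rw [← hφhom 1 1 b, one_mul])
  have hγ1 : ∀ b, γ (1:C) b = b := fun b =>
    (γ 1).injective (by rw [← hγhom 1 1 b, one_mul])
  have hψ1 : ∀ b, ψ (1:C) b = b := fun b =>
    (ψ 1).injective (by rw [← hψhom 1 1 b, one_mul])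
  have hφs0 : ∀ c', (φ c').symm (0:B) = 0 := fun c' =>
    (φ c').symm_apply_eq.mpr (hφ0 c').symm
  have hγs0 : ∀ c', (γ c').symm (0:B) = 0 := fun c' =>
    (γ c').symm_apply_eq.mpr (hγ0 c').symm
  have hψs0 : ∀ c', (ψ c').symm (0:B) = 0 := fun c' =>
    (ψ c').symm_apply_eq.mpr (hψ0 c').symm
  have hφs1 : ∀ b, (φ (1:C)).symm b = b := fun b =>
    (φ 1).symm_apply_eq.mpr (hφ1 b).symm
  have hγs1 : ∀ b, (γ (1:C)).symm b = b := fun b =>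
    (γ 1).symm_apply_eq.mpr (hγ1 b).symm
  have hψs1 : ∀ b, (ψ (1:C)).symm b = b := fun b =>
    (ψ 1).symm_apply_eq.mpr (hψ1 b).symm
  have hφsub : ∀ c' x y, φ c' (x - y) = φ c' x - φ c' y := by
    intro c' x y
    have hx := hφadd c' (x - y) y
    rw [sub_add_cancel] at hx
    rw [eq_sub_iff_add_eq, ← hx]
  have hγsub : ∀ c' x y, γ c' (x - y) = γ c' x - γ c' y := by
    intro c' x y
    have hx := hγadd c' (x - y) y
    rw [sub_add_cancel] at hx
    rw [eq_sub_iff_add_eq, ← hx]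
  -- Step A': f (b', c) = (β b' + φ c₀ (γ c₀ b₀), c₀)
  have stepA' : ∀ b', f (b', c) = (β b' + φ c₀ (γ c₀ b₀), c₀) := by
    intro b'
    have h := hfdot (b', 1) (0, c)
    simp only [hf0, hfβ, hφ0, hφ1, add_zero, one_mul] at h
    exact h
  -- Step A: f (φ c b, c) = (φ c₀ (γ c₀ b₀) + φ c₀ (β b), c₀)
  have stepA : ∀ b, f (φ c b, c) = (φ c₀ (γ c₀ b₀) + φ c₀ (β b), c₀) := by
    intro b
    have h := hfdot (0, c) (b, 1)
    simp only [hf0, hfβ, zero_add, mul_one] at h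
    exact h
  -- Claim 1
  have claim1 : ∀ b, β (φ c b) = φ c₀ (β b) := by
    intro b
    have h := (stepA' (φ c b)).symm.trans (stepA b)
    have h1 : β (φ c b) + φ c₀ (γ c₀ b₀) = φ c₀ (γ c₀ b₀) + φ c₀ (β b) :=
      congrArg Prod.fst h
    rw [add_comm (φ c₀ (γ c₀ b₀))] at h1
    exact add_right_cancel h1
  -- Step B
  have stepB : ∀ b, f (φ c (γ c b), c) = (φ c₀ (γ c₀ (S.circ b₀ (β b))), c₀) := by
    intro b
    have h := hfcirc (0, c) (b, 1)
    simp only [hf0, hfβ, mul_one, hφs0, hγs0, hψs0, hφs1, hγs1, hψs1,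
      S.zero_circ, Equiv.symm_apply_apply] at h
    exact h
  -- Step C
  have stepC : ∀ b, f (φ c (γ c b), c)
      = (φ c₀ (γ c₀ (S.circ ((ψ c₀).symm (β (ψ c b))) b₀)), c₀) := by
    intro b
    have h := hfcirc (ψ c b, 1) (0, c)
    simp only [hf0, hfβ, one_mul, hφs0, hγs0, hψs0, hφs1, hγs1, hψs1,
      S.circ_zero, Equiv.symm_apply_apply] at h
    exact h
  -- key circ relation: b₀ ∘ β b = x ∘ b₀ with x = (ψ c₀).symm (β (ψ c b))
  have key : ∀ b, S.circ b₀ (β b) = S.circ ((ψ c₀).symm (β (ψ c b))) b₀ := by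
    intro b
    have h := (stepB b).symm.trans (stepC b)
    have h1 : φ c₀ (γ c₀ (S.circ b₀ (β b)))
        = φ c₀ (γ c₀ (S.circ ((ψ c₀).symm (β (ψ c b))) b₀)) := congrArg Prod.fst h
    exact (γ c₀).injective ((φ c₀).injective h1)
  -- Claim 2
  have claim2 : ∀ b, β (γ c b) = γ c₀ (S.lam b₀ (β b)) := by
    intro b
    have hB := stepB b
    have hA := stepA' (φ c (γ c b))
    have h1 : β (φ c (γ c b)) + φ c₀ (γ c₀ b₀) = φ c₀ (γ c₀ (S.circ b₀ (β b))) :=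
      congrArg Prod.fst (hA.symm.trans hB)
    rw [claim1 (γ c b)] at h1
    apply (φ c₀).injective
    have hlam : S.lam b₀ (β b) = S.circ b₀ (β b) - b₀ := by
      rw [AddSkewBrace.lam]; abel
    rw [hlam, hγsub, hφsub, eq_sub_iff_add_eq, h1]
  refine ⟨claim1, claim2, ?_⟩
  -- Claim 3
  intro b
  rw [AddSkewBrace.lam, AddSkewBrace.lam, key b]
  abel
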